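/- Let L be a semi-primary lattice, let u ∈ L, and let φ be a partition with φ ≤ tp(u) (componentwise). Then there exists an element v ∈ L with v ≤ u and tp(v) = φ. -/

import Mathlib

/-- The height of an element: the greatest length of chains from `⊥` to `u`. -/
noncomputable def ht {L : Type*} [Preorder L] (u : L) : ℕ := (Order.height u).toNat

/-- An element `z` is a cycle if the interval `[⊥, z]` is a chain. -/
def IsCycle {L : Type*} [Lattice L] [BoundedOrder L] (z : L) : Prop :=
  IsChain (· ≤ ·) (Set.Icc (⊥ : L) z)

/-- An element `z` is a dual cycle if the interval `[z, ⊤]` is a chain. -/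
def IsDualCycle {L : Type*} [Lattice L] [BoundedOrder L] (z : L) : Prop :=
  IsChain (· ≤ ·) (Set.Icc z (⊤ : L))

/-- A lattice is semi-primary if every element is a join of cycles and a meet of
dual cycles. -/
def IsSemiPrimary (L : Type*) [Lattice L] [BoundedOrder L] : Prop :=
  ∀ u : L, (∃ s : Finset L, (∀ z ∈ s, IsCycle z) ∧ u = s.sup id) ∧
           (∃ s : Finset L, (∀ z ∈ s, IsDualCycle z) ∧ u = s.inf id)

/-- A finite family of lattice elements is independent. -/
def IndepFun {L : Type*} [Lattice L] [BoundedOrder L] {n : ℕ} (z : Fin n → L) : Prop :=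
  ∀ i, ((Finset.univ.erase i).sup z) ⊓ z i = ⊥

/-- A partition is (represented by) a multiset of positive natural numbers. -/
def IsPartition (μ : Multiset ℕ) : Prop := ∀ p ∈ μ, 0 < p

/-- The `i`-th largest part of a partition (0-indexed, 0 if out of range). -/
def partGet (μ : Multiset ℕ) (i : ℕ) : ℕ := ((μ.sort (· ≤ ·)).reverse).getD i 0

/-- Componentwise order on partitions: `μ ≤ λ` iff `μᵢ ≤ λᵢ` for all `i`. -/
def PartLE (μ lam : Multiset ℕ) : Prop := ∀ i, partGet μ i ≤ partGet lam i

/-- For `λ = (sⁿ)` and `μ ≤ λ`, the partition `λ − μ = (s − μₙ, …, s − μ₁)`. -/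
def partSub (s n : ℕ) (μ : Multiset ℕ) : Multiset ℕ :=
  Multiset.filter (fun x => 0 < x)
    (↑((List.range n).map (fun i => s - partGet μ i)) : Multiset ℕ)

/-- `u` has type `μ`: `u` is a join of independent nonzero cycles whose multiset of
heights equals `μ`. -/
def IsTypeOf {L : Type*} [Lattice L] [BoundedOrder L] (u : L) (μ : Multiset ℕ) : Prop :=
  ∃ (n : ℕ) (z : Fin n → L), (∀ i, IsCycle (z i)) ∧ (∀ i, z i ≠ ⊥) ∧ IndepFun z ∧
    u = Finset.univ.sup z ∧ (↑(List.ofFn (fun i => ht (z i))) : Multiset ℕ) = μ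

/-- The lattice metric `d(u,v) = h(u ∨ v) − h(u ∧ v)`. -/
noncomputable def dLat {L : Type*} [Lattice L] (u v : L) : ℕ := ht (u ⊔ v) - ht (u ⊓ v)

/-- The sphere of radius `r` centered at `u`. -/
def sph {L : Type*} [Lattice L] (u : L) (r : ℕ) : Set L := {v | dLat u v ≤ r}

/-- The `t`-th layer of the sphere of radius `r` centered at `u`. -/
def sphH {L : Type*} [Lattice L] (u : L) (r t : ℕ) : Set L :=
  {v | dLat u v ≤ r ∧ ht v = t}

/-- The elements of type `μ` in the sphere of radius `r` centered at `u`. -/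
def sphT {L : Type*} [Lattice L] [BoundedOrder L] (u : L) (r : ℕ) (μ : Multiset ℕ) :
    Set L := {v | dLat u v ≤ r ∧ IsTypeOf v μ}

/-- A finite semi-primary lattice is down-enumerable. -/
def DownEnum (L : Type*) [Lattice L] [BoundedOrder L] : Prop :=
  ∀ (u v : L) (φ μ : Multiset ℕ), IsTypeOf u φ → IsTypeOf v φ →
    Nat.card {w : L // IsTypeOf w μ ∧ w ≤ u} = Nat.card {w : L // IsTypeOf w μ ∧ w ≤ v}

/-- A finite semi-primary lattice is up-enumerable. -/
def UpEnum (L : Type*) [Lattice L] [BoundedOrder L] : Prop :=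
  ∀ (u v : L) (φ μ : Multiset ℕ), IsTypeOf u φ → IsTypeOf v φ →
    Nat.card {w : L // IsTypeOf w μ ∧ u ≤ w} = Nat.card {w : L // IsTypeOf w μ ∧ v ≤ w}

/-- A lattice is enumerable if it is both down- and up-enumerable. -/
def Enumerable (L : Type*) [Lattice L] [BoundedOrder L] : Prop := DownEnum L ∧ UpEnum L

/-- `α(φ,μ)`: the number of elements of type `μ` below a (any) element of type `φ`. -/
noncomputable def alphaP (L : Type*) [Lattice L] [BoundedOrder L] (φ μ : Multiset ℕ) : ℕ :=
  sSup {n | ∃ u : L, IsTypeOf u φ ∧ n = Nat.card {w : L // IsTypeOf w μ ∧ w ≤ u}}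

/-- `β(φ,μ)`: the number of elements of type `μ` above a (any) element of type `φ`. -/
noncomputable def betaP (L : Type*) [Lattice L] [BoundedOrder L] (φ μ : Multiset ℕ) : ℕ :=
  sSup {n | ∃ u : L, IsTypeOf u φ ∧ n = Nat.card {w : L // IsTypeOf w μ ∧ u ≤ w}}

/-- `α(μ, r₁, …, rₙ)`: the number of chains `x₁ ≤ ⋯ ≤ xₙ ≤ w` with `h(xᵢ) = rᵢ`,
below a (any) element `w` of type `μ`. -/
noncomputable def alphaChain (L : Type*) [Lattice L] [BoundedOrder L] (μ : Multiset ℕ)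
    {n : ℕ} (r : Fin n → ℕ) : ℕ :=
  sSup {m | ∃ w : L, IsTypeOf w μ ∧
    m = Nat.card {x : Fin n → L // (∀ i, ht (x i) = r i) ∧ Monotone x ∧ ∀ i, x i ≤ w}}



private lemma exists_le_height_eq {α : Type*} [Preorder α] {a : α} {m t : ℕ}
    (h : Order.height a = m) (htm : t ≤ m) : ∃ b, b ≤ a ∧ Order.height b = t := by
  obtain ⟨p, hlast, hlen⟩ := Order.exists_series_of_height_eq_coe a h
  have hidx := Order.height_eq_index_of_length_eq_height_last (p := p)
    (by rw [hlast, h, hlen])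
  refine ⟨p ⟨t, by omega⟩, ?_, ?_⟩
  · have : p ⟨t, by omega⟩ ≤ p.last := p.monotone (Fin.le_last _)
    rwa [hlast] at this
  · rw [hidx]

/-- Let `L` be a semi-primary lattice, `u ∈ L`, and `φ` a partition
with `φ ≤ tp(u)` componentwise. Then there exists `v ∈ L` with `v ≤ u` and `tp(v) = φ`. -/
theorem stmt0 {L : Type*} [Lattice L] [IsModularLattice L] [BoundedOrder L]
    (hlen : Order.krullDim L < ⊤) (hsp : IsSemiPrimary L)
    (u : L) (μ φ : Multiset ℕ) (hμ : IsPartition μ) (hφ : IsPartition φ)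
    (htu : IsTypeOf u μ) (hle : PartLE φ μ) :
    ∃ v : L, v ≤ u ∧ IsTypeOf v φ := by
  classical
  obtain ⟨n, z, hcyc, hne, hind, hu, hz⟩ := htu
  set f : Fin n → ℕ := fun i => ht (z i) with hf
  set σ := Tuple.sort f with hσ
  have hmono : Monotone (f ∘ σ) := Tuple.monotone_sort f
  have hperm : List.Perm (List.ofFn (f ∘ σ)) (List.ofFn f) := σ.ofFn_comp_perm f
  have hsort : List.ofFn (f ∘ σ) = μ.sort (· ≤ ·) := by
    refine (fun h1 h2 h3 => List.Perm.eq_of_pairwise' (r := (· ≤ ·)) h2 h3 h1) ?_ ?_ ?_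
    · refine hperm.trans ?_
      rw [← Multiset.coe_eq_coe, hz, Multiset.sort_eq]
    · exact List.pairwise_ofFn.mpr (fun i j h => hmono h.le)
    · exact μ.pairwise_sort _
  have hcard : (μ.sort (· ≤ ·)).length = n := by
    rw [← hsort]; simp
  have hpg : ∀ i : Fin n, partGet μ i = f (σ i.rev) := by
    intro i
    have hi : (i : ℕ) < ((μ.sort (· ≤ ·)).reverse).length := by
      simp [hcard, i.isLt]
    rw [partGet, List.getD_eq_getElem _ _ hi, List.getElem_reverse,
      List.getElem_of_eq hsort.symm (by simp [hcard]; omega), List.getElem_ofFn]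
    simp only [Function.comp_apply]
    apply congrArg
    apply congrArg
    ext
    simp [hcard, Fin.val_rev]
    omega
  set m := φ.card with hm
  have hφlen : ((φ.sort (· ≤ ·)).reverse).length = m := by simp [hm]
  have hφpos : ∀ i : ℕ, i < m → 0 < partGet φ i := by
    intro i hi
    have hi' : i < ((φ.sort (· ≤ ·)).reverse).length := by omega
    rw [partGet, List.getD_eq_getElem _ _ hi']
    apply hφ
    have := List.getElem_mem hi'
    rw [List.mem_reverse, Multiset.mem_sort] at this
    exact this
  have hmn : m ≤ n := by
    by_contra hc
    push_neg at hc
    have h1 : 0 < partGet φ n := hφpos n hc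
    have h2 : partGet μ n = 0 := by
      rw [partGet, List.getD_eq_default]
      simp [hcard]
    have := hle n
    omega
  set τ : Fin m → Fin n := fun i => σ (Fin.rev (Fin.castLE hmn i)) with hτ
  have hτinj : Function.Injective τ := by
    intro a b hab
    have := Fin.rev_injective (σ.injective hab)
    exact Fin.castLE_injective hmn this
  have hkey : ∀ i : Fin m, partGet φ i ≤ ht (z (τ i)) := by
    intro i
    have h1 : partGet μ i = ht (z (τ i)) := hpg (Fin.castLE hmn i)
    have := hle i
    omega
  have hy : ∀ i : Fin m, ∃ b, b ≤ z (τ i) ∧ Order.height b = (partGet φ i : ℕ∞) := by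
    intro i
    cases hh : Order.height (z (τ i)) with
    | top =>
      exfalso
      have h0 : ht (z (τ i)) = 0 := by simp [ht, hh]
      have := hkey i
      have := hφpos i i.isLt
      omega
    | coe k =>
      have hk : ht (z (τ i)) = k := by simp [ht, hh]
      exact exists_le_height_eq hh (by have := hkey i; omega)
  choose y hy1 hy2 using hy
  have hhty : ∀ i : Fin m, ht (y i) = partGet φ i := by
    intro i; simp [ht, hy2 i]
  refine ⟨Finset.univ.sup y, ?_, m, y, ?_, ?_, ?_, rfl, ?_⟩
  · apply Finset.sup_le
    intro i _
    refine le_trans (hy1 i) ?_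
    rw [hu]
    exact Finset.le_sup (Finset.mem_univ _)
  · intro i
    exact (hcyc (τ i)).mono (Set.Icc_subset_Icc_right (hy1 i))
  · intro i hbot
    have : ht (y i) = 0 := by simp [ht, hbot]
    have := hhty i
    have := hφpos i i.isLt
    omega
  · intro i
    rw [← le_bot_iff]
    calc (Finset.univ.erase i).sup y ⊓ y i
        ≤ (Finset.univ.erase (τ i)).sup z ⊓ z (τ i) := by
          apply inf_le_inf _ (hy1 i)
          apply Finset.sup_le
          intro j hj
          refine le_trans (hy1 j) (Finset.le_sup ?_)
          simp only [Finset.mem_erase, Finset.mem_univ, and_true]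
          exact fun h => (Finset.mem_erase.mp hj).1 (hτinj h)
      _ = ⊥ := hind (τ i)
  · have h1 : List.ofFn (fun i : Fin m => ht (y i))
        = (φ.sort (· ≤ ·)).reverse := by
      apply List.ext_getElem
      · simp [hm]
      · intro i h1 h2
        rw [List.getElem_ofFn]
        rw [hhty, partGet, List.getD_eq_getElem _ _ (by simpa using h2)]
    rw [h1, Multiset.coe_reverse, Multiset.sort_eq]
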